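/- Let σ > 0, g ≥ 0, k ≥ 2, α ∈ (0,1), and suppose f₁, f₂ ∈ C^{k,α}(𝕋^d) satisfy σH(f_j) + g f_j = h_j with h_j ∈ C^{k−2,α}(𝕋^d) (and additionally f_j have mean zero if g = 0). Then σ/(1 + max{‖∇f₁‖_∞, ‖∇f₂‖_∞}²)^{3/2} ∫_{𝕋^d}|∇(f₁−f₂)|² + g ∫_{𝕋^d}(f₁−f₂)² ≤ ∫_{𝕋^d}(h₁−h₂)(f₁−f₂). -/

import Mathlib

open Real

/-- The fundamental cell `[0, 2π]^d` of the torus. -/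
def torusBox (d : ℕ) : Set (EuclideanSpace ℝ (Fin d)) :=
  {x | ∀ i, x i ∈ Set.Icc 0 (2 * π)}

/-- The mean curvature operator `H(η) = -div(∇η/√(1+|∇η|²))`. -/
noncomputable def meanCurv {d : ℕ} (η : EuclideanSpace ℝ (Fin d) → ℝ)
    (x : EuclideanSpace ℝ (Fin d)) : ℝ :=
  -∑ i : Fin d,
    fderiv ℝ (fun y => (Real.sqrt (1 + ‖gradient η y‖ ^ 2))⁻¹ * gradient η y i) x
      (EuclideanSpace.single i 1)

open MeasureTheory

section aux

variable {E : Type*} [NormedAddCommGroup E] [InnerProductSpace ℝ E] [CompleteSpace E]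

set_option linter.unusedSectionVars false

set_option maxHeartbeats 1000000 in
-- purely algebraic core
lemma mono_alg (P Q K t a b m : ℝ) (hP0 : 0 ≤ P) (hQ0 : 0 ≤ Q)
    (hp : P ≤ K) (hq : Q ≤ K)
    (ha : a = Real.sqrt (1 + P ^ 2)) (hb : b = Real.sqrt (1 + Q ^ 2))
    (hm : m = Real.sqrt (1 + K ^ 2))
    (ht1 : t ≤ P * Q) (ht2 : -(P*Q) ≤ t) :
    (P ^ 2 - 2 * t + Q ^ 2) / m ^ 3 ≤ a⁻¹ * (P ^ 2 - t) + b⁻¹ * (Q ^ 2 - t) := by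
  have hK0 : 0 ≤ K := le_trans hP0 hp
  have ha2 : a ^ 2 = 1 + P ^ 2 := by rw [ha]; exact Real.sq_sqrt (by positivity)
  have hb2 : b ^ 2 = 1 + Q ^ 2 := by rw [hb]; exact Real.sq_sqrt (by positivity)
  have hm2 : m ^ 2 = 1 + K ^ 2 := by rw [hm]; exact Real.sq_sqrt (by positivity)
  have ha0' : 0 ≤ a := by rw [ha]; positivity
  have hb0' : 0 ≤ b := by rw [hb]; positivity
  have hm0' : 0 ≤ m := by rw [hm]; positivity
  have ha1 : 1 ≤ a := by nlinarith [sq_nonneg P]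
  have hb1 : 1 ≤ b := by nlinarith [sq_nonneg Q]
  have hm1 : 1 ≤ m := by nlinarith [sq_nonneg K]
  have ham : a ≤ m := by rw [ha, hm]; exact Real.sqrt_le_sqrt (by nlinarith)
  have hbm : b ≤ m := by rw [hb, hm]; exact Real.sqrt_le_sqrt (by nlinarith)
  have ha0 : (0:ℝ) < a := by linarith
  have hb0 : (0:ℝ) < b := by linarith
  have hm0 : (0:ℝ) < m := by linarith
  rw [div_le_iff₀ (by positivity)]
  have hexp : a⁻¹ * (P ^ 2 - t) + b⁻¹ * (Q ^ 2 - t) = (a + b) * (a*b - 1 - t) / (a * b) := by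
    have hP2 : P ^ 2 = a ^ 2 - 1 := by linarith
    have hQ2 : Q ^ 2 = b ^ 2 - 1 := by linarith
    rw [hP2, hQ2]
    field_simp
    ring
  rw [hexp, div_mul_eq_mul_div, le_div_iff₀ (by positivity)]
  have hab_sqrt : a * b = Real.sqrt ((1 + P^2) * (1 + Q^2)) := by
    rw [ha, hb, ← Real.sqrt_mul (by positivity)]
  have h1t : 1 + t ≤ a * b := by
    have h1 : 1 + t ≤ 1 + P * Q := by linarith
    have h2 : (1 + P * Q) = Real.sqrt ((1 + P*Q)^2) := (Real.sqrt_sq (by positivity)).symm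
    have h3 : Real.sqrt ((1 + P*Q)^2) ≤ Real.sqrt ((1 + P^2) * (1 + Q^2)) :=
      Real.sqrt_le_sqrt (by nlinarith [sq_nonneg (P - Q)])
    rw [hab_sqrt]; linarith
  have habPQ : P * Q ≤ a * b := by
    have h2 : (P * Q) = Real.sqrt ((P*Q)^2) := (Real.sqrt_sq (by positivity)).symm
    have h3 : Real.sqrt ((P*Q)^2) ≤ Real.sqrt ((1 + P^2) * (1 + Q^2)) :=
      Real.sqrt_le_sqrt (by nlinarith [sq_nonneg (P*Q)])
    rw [hab_sqrt]; linarith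
  have hX : 0 ≤ a * b - 1 - t := by linarith
  have h2 : (P ^ 2 - 2*t + Q ^ 2) ≤ (a*b - 1 - t) * (a*b + 1 + t) := by
    nlinarith [sq_nonneg (P*Q - t), sq_nonneg (P*Q + t)]
  have h3 : a*b + 1 + t ≤ 2*(a*b) := by linarith
  have hBX : P ^ 2 - 2*t + Q ^ 2 ≤ 2*(a*b) * (a*b - 1 - t) := by nlinarith
  have habm : a * b ≤ m ^ 2 := by
    have h2 : m ^ 2 = Real.sqrt ((1 + K^2)^2) := by
      rw [Real.sqrt_sq (by positivity), hm2]
    have h3 : Real.sqrt ((1 + P^2) * (1 + Q^2)) ≤ Real.sqrt ((1 + K^2)^2) :=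
      Real.sqrt_le_sqrt (by nlinarith [mul_le_mul hp hp hP0 hK0, mul_le_mul hq hq hQ0 hK0, mul_nonneg (mul_nonneg hP0 hP0) (mul_nonneg hQ0 hQ0), mul_le_mul (mul_le_mul hp hp hP0 hK0) (mul_le_mul hq hq hQ0 hK0) (mul_nonneg hQ0 hQ0) (mul_nonneg hK0 hK0)])
    rw [hab_sqrt, h2]; exact h3
  have s1 : 2*(a*b) ≤ m*(a+b) := by
    nlinarith [mul_nonneg (sub_nonneg.2 ham) hb0', mul_nonneg (sub_nonneg.2 hbm) ha0']
  have hA : 2*(a*b)^2 ≤ (a + b) * m ^ 3 := by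
    nlinarith [mul_le_mul_of_nonneg_left s1 (sq_nonneg m),
      mul_le_mul_of_nonneg_right habm (by positivity : (0:ℝ) ≤ 2*(a*b))]
  nlinarith [mul_nonneg (sub_nonneg.2 hA) hX,
    mul_nonneg (sub_nonneg.2 hBX) (by positivity : (0:ℝ) ≤ a * b),
    sq_nonneg (P - Q)]

lemma mono_lemma {E : Type*} [NormedAddCommGroup E] [InnerProductSpace ℝ E]
    (K : ℝ) (p q : E) (hp : ‖p‖ ≤ K) (hq : ‖q‖ ≤ K) :
    ‖p - q‖ ^ 2 / (1 + K ^ 2) ^ ((3:ℝ)/2) ≤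
      inner ℝ ((Real.sqrt (1 + ‖p‖ ^ 2))⁻¹ • p - (Real.sqrt (1 + ‖q‖ ^ 2))⁻¹ • q) (p - q) := by
  have hK0 : 0 ≤ K := le_trans (norm_nonneg p) hp
  have hinner : (inner ℝ ((Real.sqrt (1 + ‖p‖ ^ 2))⁻¹ • p - (Real.sqrt (1 + ‖q‖ ^ 2))⁻¹ • q) (p - q) : ℝ)
      = (Real.sqrt (1 + ‖p‖ ^ 2))⁻¹ * (‖p‖ ^ 2 - inner ℝ p q)
        + (Real.sqrt (1 + ‖q‖ ^ 2))⁻¹ * (‖q‖ ^ 2 - inner ℝ p q) := by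
    rw [inner_sub_left, inner_sub_right, inner_sub_right, real_inner_smul_left,
      real_inner_smul_left, real_inner_smul_left, real_inner_smul_left,
      real_inner_self_eq_norm_sq, real_inner_self_eq_norm_sq, real_inner_comm q p]
    ring
  have hDnorm : ‖p - q‖ ^ 2 = ‖p‖ ^ 2 - 2 * (inner ℝ p q : ℝ) + ‖q‖ ^ 2 := by
    rw [norm_sub_sq_real]
  have hrpow : (1 + K ^ 2) ^ ((3:ℝ)/2) = Real.sqrt (1 + K ^ 2) ^ 3 := by
    rw [Real.sqrt_eq_rpow, ← Real.rpow_natCast ((1 + K^2) ^ ((1:ℝ)/2)) 3,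
      ← Real.rpow_mul (by positivity)]
    norm_num
  rw [hinner, hDnorm, hrpow]
  exact mono_alg ‖p‖ ‖q‖ K (inner ℝ p q) _ _ _ (norm_nonneg p) (norm_nonneg q) hp hq rfl rfl rfl
    (abs_le.mp (abs_real_inner_le_norm p q)).2 (abs_le.mp (abs_real_inner_le_norm p q)).1

end aux

section aux2


section transfer
variable {d : ℕ}

lemma torusBox_preimage (d : ℕ) :
    torusBox d = (MeasurableEquiv.toLp 2 (Fin d → ℝ)).symm ⁻¹'
      (Set.Icc (0 : Fin d → ℝ) (fun _ => 2 * π)) := by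
  ext x
  simp only [torusBox, Set.mem_setOf_eq, Set.mem_preimage, Set.mem_Icc, Pi.le_def,
    Set.mem_Icc]
  constructor
  · intro h
    exact ⟨fun i => (h i).1, fun i => (h i).2⟩
  · intro h i
    exact ⟨h.1 i, h.2 i⟩

lemma integral_torusBox (F : EuclideanSpace ℝ (Fin d) → ℝ) :
    ∫ x in torusBox d, F x =
      ∫ y in Set.Icc (0 : Fin d → ℝ) (fun _ => 2 * π),
        F ((MeasurableEquiv.toLp 2 (Fin d → ℝ)).symm.symm y) := by
  rw [torusBox_preimage]
  rw [← (EuclideanSpace.volume_preserving_symm_measurableEquiv_toLp (Fin d)).setIntegral_preimage_emb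
    (MeasurableEquiv.toLp 2 (Fin d → ℝ)).symm.measurableEmbedding
    (fun y => F ((MeasurableEquiv.toLp 2 (Fin d → ℝ)).symm.symm y))]
  simp

lemma isCompact_torusBox (d : ℕ) : IsCompact (torusBox d) := by
  rw [torusBox_preimage]
  have hc : ⇑(MeasurableEquiv.toLp 2 (Fin d → ℝ)).symm =
      ⇑(EuclideanSpace.equiv (Fin d) ℝ).toHomeomorph := rfl
  rw [hc]
  exact ((EuclideanSpace.equiv (Fin d) ℝ).toHomeomorph.isCompact_preimage).2 isCompact_Icc

end transfer

-- key divergence lemma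
lemma integral_div_zero {d : ℕ} (φ : EuclideanSpace ℝ (Fin d) → EuclideanSpace ℝ (Fin d))
    (hφ : ContDiff ℝ 1 φ)
    (hper : ∀ (x : EuclideanSpace ℝ (Fin d)) (i : Fin d),
      φ (x + (2 * π) • EuclideanSpace.single i 1) = φ x) :
    ∫ x in torusBox d,
      ∑ i, fderiv ℝ (fun y => φ y i) x (EuclideanSpace.single i 1) = 0 := by
  cases d with
  | zero => simp
  | succ n => ?_
  set L := EuclideanSpace.equiv (Fin (n+1)) ℝ with hL
  have hLsym : ∀ y, (MeasurableEquiv.toLp 2 (Fin (n+1) → ℝ)).symm.symm y = L.symm y := fun _ => rfl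
  have hsingle : ∀ i : Fin (n+1), L.symm (Pi.single i 1) = EuclideanSpace.single i 1 := by
    intro i; rfl
  -- coordinate functions
  set ψ : Fin (n+1) → EuclideanSpace ℝ (Fin (n+1)) → ℝ := fun i y => φ y i with hψ
  have hψD : ∀ i, ContDiff ℝ 1 (ψ i) := by
    intro i
    exact (ContinuousLinearMap.contDiff (EuclideanSpace.proj i)).comp hφ
  set f : Fin (n+1) → (Fin (n+1) → ℝ) → ℝ := fun i y => ψ i (L.symm y) with hf
  set f' : Fin (n+1) → (Fin (n+1) → ℝ) → (Fin (n+1) → ℝ) →L[ℝ] ℝ :=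
    fun i y => (fderiv ℝ (ψ i) (L.symm y)).comp
      (L.symm : (Fin (n+1) → ℝ) →L[ℝ] EuclideanSpace ℝ (Fin (n+1))) with hf'
  have hfD : ∀ (y) (i), HasFDerivAt (f i) (f' i y) y := by
    intro y i
    exact (((hψD i).differentiable (by norm_num)).differentiableAt.hasFDerivAt).comp y
      (L.symm.hasFDerivAt)
  have hcontfderiv : ∀ i, Continuous fun y : Fin (n+1) → ℝ => fderiv ℝ (ψ i) (L.symm y) :=
    fun i => ((hψD i).continuous_fderiv (by norm_num)).comp L.symm.continuous
  have key := MeasureTheory.integral_divergence_of_hasFDerivAt_off_countable'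
    (0 : Fin (n+1) → ℝ) (fun _ => 2 * π)
    (fun i => by positivity)
    f f' ∅ Set.countable_empty
    (fun i => ((hψD i).continuous.comp L.symm.continuous).continuousOn)
    (fun x _ i => hfD x i)
    (by
      apply ContinuousOn.integrableOn_compact isCompact_Icc
      apply Continuous.continuousOn
      apply continuous_finset_sum
      intro i _
      exact (hcontfderiv i).clm_apply continuous_const)
  -- faces cancel
  have hface : ∀ (i : Fin (n+1)) (x : Fin n → ℝ),
      Fin.insertNth i (2 * π) x = Fin.insertNth i (0:ℝ) x + ((2 * π) • (Pi.single i 1 : Fin (n+1) → ℝ)) := by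
    intro i x
    funext j
    by_cases hj : j = i
    · subst hj; simp
    · obtain ⟨k, rfl⟩ := Fin.exists_succAbove_eq hj
      simp [Fin.insertNth_apply_succAbove, Pi.single_eq_of_ne (Fin.succAbove_ne i k)]
  have hfaces : ∀ i : Fin (n+1), ∀ x : Fin n → ℝ,
      f i (Fin.insertNth i ((fun _ => 2*π : Fin (n+1) → ℝ) i) x)
      = f i (Fin.insertNth i ((0 : Fin (n+1) → ℝ) i) x) := by
    intro i x
    show f i (Fin.insertNth i (2*π) x) = f i (Fin.insertNth i (0:ℝ) x)
    rw [hface i x]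
    show ψ i (L.symm (Fin.insertNth i (0:ℝ) x + ((2 * π) • (Pi.single i 1 : Fin (n+1) → ℝ))))
      = ψ i (L.symm (Fin.insertNth i (0:ℝ) x))
    rw [map_add, _root_.map_smul, hsingle i]
    exact congrArg (fun z => z i) (hper (L.symm (Fin.insertNth i (0:ℝ) x)) i)
  rw [integral_torusBox]
  have hintg : ∀ y : Fin (n+1) → ℝ,
      (∑ i, fderiv ℝ (fun z => φ z i) ((MeasurableEquiv.toLp 2 (Fin (n+1) → ℝ)).symm.symm y)
        (EuclideanSpace.single i 1)) = ∑ i, f' i y (Pi.single i 1) := by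
    intro y
    refine Finset.sum_congr rfl fun i _ => ?_
    rw [hLsym]
    show fderiv ℝ (ψ i) (L.symm y) (EuclideanSpace.single i 1) = _
    rw [hf']
    simp only [ContinuousLinearMap.comp_apply]
    rw [show (L.symm : (Fin (n+1) → ℝ) →L[ℝ] EuclideanSpace ℝ (Fin (n+1))) (Pi.single i 1)
      = EuclideanSpace.single i 1 from hsingle i]
  rw [show (∫ y in Set.Icc (0 : Fin (n+1) → ℝ) (fun _ => 2 * π),
      ∑ i, fderiv ℝ (fun z => φ z i) ((MeasurableEquiv.toLp 2 (Fin (n+1) → ℝ)).symm.symm y)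
        (EuclideanSpace.single i 1))
    = ∫ y in Set.Icc (0 : Fin (n+1) → ℝ) (fun _ => 2 * π), ∑ i, f' i y (Pi.single i 1)
    from integral_congr_ae (Filter.Eventually.of_forall (fun y => hintg y))]
  rw [key]
  apply Finset.sum_eq_zero
  intro i _
  rw [sub_eq_zero]
  exact integral_congr_ae (Filter.Eventually.of_forall (fun x => hfaces i x))

end aux2

section aux3
variable {E : Type*} [NormedAddCommGroup E] [InnerProductSpace ℝ E] [CompleteSpace E]
set_option linter.unusedSectionVars false

variable {E : Type*} [NormedAddCommGroup E] [InnerProductSpace ℝ E] [CompleteSpace E]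

lemma contDiff_N : ContDiff ℝ 1 (fun p : E => (Real.sqrt (1 + ‖p‖ ^ 2))⁻¹ • p) := by
  refine ContDiff.smul (ContDiff.inv ?_ fun x => ?_) contDiff_id
  · exact (contDiff_const.add (contDiff_norm_sq ℝ)).sqrt fun x => by positivity
  · positivity

lemma gradient_eq_fderiv (f : E → ℝ) (x : E) :
    gradient f x = (InnerProductSpace.toDual ℝ E).symm (fderiv ℝ f x) := rfl

lemma gradient_contDiff (f : E → ℝ) (hf : ContDiff ℝ 2 f) : ContDiff ℝ 1 (gradient f) := by
  have h1 : ContDiff ℝ 1 (fderiv ℝ f) := hf.fderiv_right (by norm_num)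
  exact ((InnerProductSpace.toDual ℝ E).symm.toLinearIsometry.toContinuousLinearMap.contDiff).comp h1

lemma fderiv_periodic (f : E → ℝ) (hf : Differentiable ℝ f) (v : E)
    (h : ∀ x, f (x + v) = f x) (x : E) : fderiv ℝ f (x + v) = fderiv ℝ f x := by
  have h1 : HasFDerivAt (fun y => f (y + v)) (fderiv ℝ f (x + v)) x :=
    (hf (x + v)).hasFDerivAt.comp x ((hasFDerivAt_id x).add_const v)
  have h2 : (fun y => f (y + v)) = f := funext h
  rw [h2] at h1
  exact (h1.fderiv).symm

lemma gradient_periodic (f : E → ℝ) (hf : Differentiable ℝ f) (v : E)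
    (h : ∀ x, f (x + v) = f x) (x : E) : gradient f (x + v) = gradient f x := by
  rw [gradient_eq_fderiv, gradient_eq_fderiv, fderiv_periodic f hf v h x]

lemma gradient_sub (f g : E → ℝ) (hf : Differentiable ℝ f) (hg : Differentiable ℝ g) (x : E) :
    gradient (fun y => f y - g y) x = gradient f x - gradient g x := by
  rw [gradient_eq_fderiv, gradient_eq_fderiv, gradient_eq_fderiv,
    fderiv_fun_sub (hf x) (hg x), map_sub]

lemma inner_gradient (f : E → ℝ) (x v : E) : (inner ℝ (gradient f x) v : ℝ) = fderiv ℝ f x v := by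
  rw [gradient_eq_fderiv]
  exact InnerProductSpace.toDual_symm_apply


end aux3

/-- Energy estimate for differences of solutions of the capillary-gravity equation
`σH(f) + gf = h` on the torus: with `K` a uniform bound on `|∇f₁|, |∇f₂|`
(`K = max{‖∇f₁‖_∞, ‖∇f₂‖_∞}`),
`σ(1+K²)^{-3/2}∫|∇(f₁-f₂)|² + g∫(f₁-f₂)² ≤ ∫(h₁-h₂)(f₁-f₂)`. -/
theorem stmt_16 (d : ℕ) (σ g : ℝ) (hσ : 0 < σ) (hg : 0 ≤ g)
    (f₁ f₂ h₁ h₂ : EuclideanSpace ℝ (Fin d) → ℝ)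
    (hf₁ : ContDiff ℝ 2 f₁) (hf₂ : ContDiff ℝ 2 f₂)
    (hcont₁ : Continuous h₁) (hcont₂ : Continuous h₂)
    (hper₁ : ∀ (x : EuclideanSpace ℝ (Fin d)) (i : Fin d),
      f₁ (x + (2 * π) • EuclideanSpace.single i 1) = f₁ x)
    (hper₂ : ∀ (x : EuclideanSpace ℝ (Fin d)) (i : Fin d),
      f₂ (x + (2 * π) • EuclideanSpace.single i 1) = f₂ x)
    (heq₁ : ∀ x, σ * meanCurv f₁ x + g * f₁ x = h₁ x)
    (heq₂ : ∀ x, σ * meanCurv f₂ x + g * f₂ x = h₂ x)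
    (hmean : g = 0 → (∫ x in torusBox d, f₁ x = 0) ∧ (∫ x in torusBox d, f₂ x = 0))
    (K : ℝ) (hK₁ : ∀ x, ‖gradient f₁ x‖ ≤ K) (hK₂ : ∀ x, ‖gradient f₂ x‖ ≤ K) :
    σ / (1 + K ^ 2) ^ ((3 : ℝ) / 2) *
        (∫ x in torusBox d, ‖gradient (fun y => f₁ y - f₂ y) x‖ ^ 2) +
      g * (∫ x in torusBox d, (f₁ x - f₂ x) ^ 2) ≤
      ∫ x in torusBox d, (h₁ x - h₂ x) * (f₁ x - f₂ x) := by
  have hbox := isCompact_torusBox d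
  have hboxm : MeasurableSet (torusBox d) := hbox.isClosed.measurableSet
  set c : ℝ := (1 + K ^ 2) ^ ((3 : ℝ) / 2) with hc
  have hc0 : 0 < c := by rw [hc]; positivity
  set u : EuclideanSpace ℝ (Fin d) → ℝ := fun y => f₁ y - f₂ y with hudef
  have hu2 : ContDiff ℝ 2 u := hf₁.sub hf₂
  have hu1 : ContDiff ℝ 1 u := hu2.of_le (by norm_num)
  have hdf₁ : Differentiable ℝ f₁ := hf₁.differentiable (by norm_num)
  have hdf₂ : Differentiable ℝ f₂ := hf₂.differentiable (by norm_num)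
  have hdu : Differentiable ℝ u := hu1.differentiable (by norm_num)
  have hG₁ : ContDiff ℝ 1 (gradient f₁) := gradient_contDiff f₁ hf₁
  have hG₂ : ContDiff ℝ 1 (gradient f₂) := gradient_contDiff f₂ hf₂
  have hGu : ContDiff ℝ 1 (gradient u) := gradient_contDiff u hu2
  set V₁ : EuclideanSpace ℝ (Fin d) → EuclideanSpace ℝ (Fin d) :=
    fun y => (Real.sqrt (1 + ‖gradient f₁ y‖ ^ 2))⁻¹ • gradient f₁ y with hV₁def
  set V₂ : EuclideanSpace ℝ (Fin d) → EuclideanSpace ℝ (Fin d) :=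
    fun y => (Real.sqrt (1 + ‖gradient f₂ y‖ ^ 2))⁻¹ • gradient f₂ y with hV₂def
  have hV₁ : ContDiff ℝ 1 V₁ := contDiff_N.comp hG₁
  have hV₂ : ContDiff ℝ 1 V₂ := contDiff_N.comp hG₂
  set W : EuclideanSpace ℝ (Fin d) → EuclideanSpace ℝ (Fin d) := fun y => V₁ y - V₂ y with hWdef
  have hW : ContDiff ℝ 1 W := hV₁.sub hV₂
  set φ : EuclideanSpace ℝ (Fin d) → EuclideanSpace ℝ (Fin d) := fun y => u y • W y with hφdef
  have hφ : ContDiff ℝ 1 φ := hu1.smul hW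
  -- periodicity of φ
  have hperφ : ∀ (x : EuclideanSpace ℝ (Fin d)) (i : Fin d),
      φ (x + (2 * π) • EuclideanSpace.single i 1) = φ x := by
    intro x i
    have hg₁ := gradient_periodic f₁ hdf₁ ((2 * π) • EuclideanSpace.single i 1)
      (fun z => hper₁ z i) x
    have hg₂ := gradient_periodic f₂ hdf₂ ((2 * π) • EuclideanSpace.single i 1)
      (fun z => hper₂ z i) x
    simp only [hφdef, hWdef, hV₁def, hV₂def, hudef, hg₁, hg₂, hper₁ x i, hper₂ x i]
  -- the divergence integrand
  set D : EuclideanSpace ℝ (Fin d) → ℝ :=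
    fun x => ∑ i, fderiv ℝ (fun y => φ y i) x (EuclideanSpace.single i 1) with hDdef
  have hDzero : ∫ x in torusBox d, D x = 0 := integral_div_zero φ hφ hperφ
  -- coordinate differentiability
  have hV₁i : ∀ (i : Fin d) (x), DifferentiableAt ℝ (fun y => V₁ y i) x := fun i x =>
    ((((EuclideanSpace.proj i : EuclideanSpace ℝ (Fin d) →L[ℝ] ℝ)).contDiff.comp
      hV₁).differentiable (by norm_num)) x
  have hV₂i : ∀ (i : Fin d) (x), DifferentiableAt ℝ (fun y => V₂ y i) x := fun i x =>
    ((((EuclideanSpace.proj i : EuclideanSpace ℝ (Fin d) →L[ℝ] ℝ)).contDiff.comp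
      hV₂).differentiable (by norm_num)) x
  have hWi : ∀ (i : Fin d) (x), DifferentiableAt ℝ (fun y => W y i) x := fun i x =>
    ((((EuclideanSpace.proj i : EuclideanSpace ℝ (Fin d) →L[ℝ] ℝ)).contDiff.comp
      hW).differentiable (by norm_num)) x
  -- pointwise identity: (mc₁ - mc₂) * u = ⟪W, ∇u⟫ - D
  have hI : ∀ x, (meanCurv f₁ x - meanCurv f₂ x) * u x
      = (inner ℝ (W x) (gradient u x) : ℝ) - D x := by
    intro x
    have hcoordW : ∀ i : Fin d, fderiv ℝ (fun y => W y i) x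
        = fderiv ℝ (fun y => V₁ y i) x - fderiv ℝ (fun y => V₂ y i) x := by
      intro i
      have : (fun y => W y i) = fun y => (fun z => V₁ z i) y - (fun z => V₂ z i) y := rfl
      rw [this, fderiv_fun_sub (hV₁i i x) (hV₂i i x)]
    have hcoordφ : ∀ i : Fin d, fderiv ℝ (fun y => φ y i) x
        = u x • fderiv ℝ (fun y => W y i) x + W x i • fderiv ℝ u x := by
      intro i
      have h0 : (fun y => φ y i) = fun y => u y * W y i := rfl
      rw [h0, fderiv_fun_mul (hdu x) (hWi i x)]
    have hmc : meanCurv f₁ x - meanCurv f₂ x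
        = -∑ i, fderiv ℝ (fun y => W y i) x (EuclideanSpace.single i 1) := by
      have e₁ : meanCurv f₁ x
          = -∑ i, fderiv ℝ (fun y => V₁ y i) x (EuclideanSpace.single i 1) := rfl
      have e₂ : meanCurv f₂ x
          = -∑ i, fderiv ℝ (fun y => V₂ y i) x (EuclideanSpace.single i 1) := rfl
      have hterm : ∀ i ∈ Finset.univ, fderiv ℝ (fun y => W y i) x (EuclideanSpace.single i 1)
          = fderiv ℝ (fun y => V₁ y i) x (EuclideanSpace.single i 1)
            - fderiv ℝ (fun y => V₂ y i) x (EuclideanSpace.single i 1) := fun i _ => by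
        rw [hcoordW i]; rfl
      rw [e₁, e₂, Finset.sum_congr rfl hterm, Finset.sum_sub_distrib]
      ring
    have hgradcoord : ∀ i : Fin d, (gradient u x) i
        = fderiv ℝ u x (EuclideanSpace.single i 1) := by
      intro i
      rw [← inner_gradient u x, EuclideanSpace.inner_single_right]
      simp
    have hinnerWu : (inner ℝ (W x) (gradient u x) : ℝ)
        = ∑ i, W x i * fderiv ℝ u x (EuclideanSpace.single i 1) := by
      have h0 : (inner ℝ (W x) (gradient u x) : ℝ) = ∑ i, W x i * (gradient u x) i := by
        rw [PiLp.inner_apply]; exact Finset.sum_congr rfl fun i _ => by simp [mul_comm]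
      rw [h0]
      exact Finset.sum_congr rfl fun i _ => by rw [hgradcoord i]
    have hDx : D x = u x * (∑ i, fderiv ℝ (fun y => W y i) x (EuclideanSpace.single i 1))
        + ∑ i, W x i * fderiv ℝ u x (EuclideanSpace.single i 1) := by
      have h0 : D x = ∑ i, (u x * fderiv ℝ (fun y => W y i) x (EuclideanSpace.single i 1)
          + W x i * fderiv ℝ u x (EuclideanSpace.single i 1)) := by
        rw [hDdef]
        exact Finset.sum_congr rfl fun i _ => by rw [hcoordφ i]; rfl
      rw [h0, Finset.sum_add_distrib, ← Finset.mul_sum]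
    rw [hmc, hinnerWu, hDx]
    ring
  -- continuity facts
  have hcontGu : Continuous (gradient u) := hGu.continuous
  have hcontinner : Continuous fun x => (inner ℝ (W x) (gradient u x) : ℝ) :=
    hW.continuous.inner hcontGu
  have hcontD : Continuous D := by
    rw [hDdef]
    apply continuous_finset_sum
    intro i _
    have h1 : ContDiff ℝ 1 (fun y => φ y i) :=
      ((EuclideanSpace.proj i : EuclideanSpace ℝ (Fin d) →L[ℝ] ℝ)).contDiff.comp hφ
    exact (h1.continuous_fderiv (by norm_num)).clm_apply continuous_const
  -- integrability
  have hint_inner : IntegrableOn (fun x => (inner ℝ (W x) (gradient u x) : ℝ)) (torusBox d) :=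
    hcontinner.continuousOn.integrableOn_compact hbox
  have hint_D : IntegrableOn D (torusBox d) := hcontD.continuousOn.integrableOn_compact hbox
  have hint_u2 : IntegrableOn (fun x => u x ^ 2) (torusBox d) :=
    ((hu1.continuous).pow 2).continuousOn.integrableOn_compact hbox
  have hint_norm : IntegrableOn (fun x => c⁻¹ * ‖gradient u x‖ ^ 2) (torusBox d) :=
    (continuous_const.mul ((hcontGu.norm).pow 2)).continuousOn.integrableOn_compact hbox
  -- pointwise rewriting of the equation
  have heqpt : ∀ x, (h₁ x - h₂ x) * u x
      = σ * ((inner ℝ (W x) (gradient u x) : ℝ) - D x) + g * u x ^ 2 := by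
    intro x
    have hh : h₁ x - h₂ x = σ * (meanCurv f₁ x - meanCurv f₂ x) + g * u x := by
      rw [← heq₁ x, ← heq₂ x, hudef]; ring
    calc (h₁ x - h₂ x) * u x = σ * ((meanCurv f₁ x - meanCurv f₂ x) * u x) + g * u x ^ 2 := by
          rw [hh]; ring
      _ = σ * ((inner ℝ (W x) (gradient u x) : ℝ) - D x) + g * u x ^ 2 := by rw [hI x]
  have hsplit : ∫ x in torusBox d, (h₁ x - h₂ x) * u x
      = σ * (∫ x in torusBox d, (inner ℝ (W x) (gradient u x) : ℝ))
        + g * ∫ x in torusBox d, u x ^ 2 := by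
    rw [setIntegral_congr_fun hboxm (fun x _ => heqpt x)]
    have hint_sum1 : IntegrableOn
        (fun x => σ * ((inner ℝ (W x) (gradient u x) : ℝ) - D x)) (torusBox d) :=
      (hint_inner.sub hint_D).const_mul σ
    have hint_sum2 : IntegrableOn (fun x => g * u x ^ 2) (torusBox d) := hint_u2.const_mul g
    rw [integral_add hint_sum1 hint_sum2, integral_const_mul, integral_const_mul,
      integral_sub hint_inner hint_D, hDzero, sub_zero]
  -- monotonicity bound
  have hmono : (∫ x in torusBox d, c⁻¹ * ‖gradient u x‖ ^ 2)
      ≤ ∫ x in torusBox d, (inner ℝ (W x) (gradient u x) : ℝ) := by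
    apply setIntegral_mono_on hint_norm hint_inner hboxm
    intro x _
    have hgsub : gradient u x = gradient f₁ x - gradient f₂ x := by
      rw [hudef]
      exact gradient_sub f₁ f₂ hdf₁ hdf₂ x
    rw [inv_mul_eq_div, hgsub, hWdef, hV₁def, hV₂def, hc]
    exact mono_lemma K _ _ (hK₁ x) (hK₂ x)
  -- conclusion
  have hgoal1 : (∫ x in torusBox d, (h₁ x - h₂ x) * (f₁ x - f₂ x))
      = ∫ x in torusBox d, (h₁ x - h₂ x) * u x := by rw [hudef]
  have hgoal2 : (∫ x in torusBox d, (f₁ x - f₂ x) ^ 2) = ∫ x in torusBox d, u x ^ 2 := by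
    rw [hudef]
  rw [hgoal1, hgoal2, hsplit]
  have hfinal : σ / c * (∫ x in torusBox d, ‖gradient u x‖ ^ 2)
      ≤ σ * ∫ x in torusBox d, (inner ℝ (W x) (gradient u x) : ℝ) := by
    have h0 : σ / c * (∫ x in torusBox d, ‖gradient u x‖ ^ 2)
        = σ * ∫ x in torusBox d, c⁻¹ * ‖gradient u x‖ ^ 2 := by
      rw [integral_const_mul]; ring
    rw [h0]
    exact mul_le_mul_of_nonneg_left hmono hσ.le
  have := add_le_add_left hfinal (g * ∫ x in torusBox d, u x ^ 2)
  exact this
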